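/- arXiv:2301.13159 — 2 statements merged into one kernel-verified Lean document; each statement's English description precedes it below -/
import Mathlib

section
/- With 𝓛' as the block circulant supra-Laplacian with diagonal blocks L + 2ωI and off-diagonal/corner blocks −ωI (L symmetric PSD with one-dimensional kernel, ω > 0), the smallest eigenvalue of 𝓛' is 0, it is simple, and its eigenspace is spanned by the vector whose every block equals the kernel vector v₀ of L. -/
open Matrix Real

def blockCirc {T N : ℕ} [NeZero T] (L W : Matrix (Fin N) (Fin N) ℝ) :
    Matrix (Fin T × Fin N) (Fin T × Fin N) ℝ :=
  fun p q =>
    if p.1 = q.1 then L p.2 q.2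
    else if q.1 = p.1 + 1 ∨ q.1 = p.1 - 1 then W p.2 q.2 else 0

open scoped Fin.CommRing

lemma fin_add_one_ne {T : ℕ} [NeZero T] (hT : 3 ≤ T) (t : Fin T) : t + 1 ≠ t := by
  intro h
  have h1 : (1 : Fin T) = 0 := by
    have := congrArg (fun z => z - t) h
    simpa [add_comm, add_sub_cancel_right] using this
  rw [Fin.one_eq_zero_iff] at h1; omega

lemma fin_sub_one_ne {T : ℕ} [NeZero T] (hT : 3 ≤ T) (t : Fin T) : t - 1 ≠ t := by
  intro h
  have h1 : (1 : Fin T) = 0 := by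
    have := congrArg (fun z => t - z) h
    simpa [sub_sub_cancel] using this
  rw [Fin.one_eq_zero_iff] at h1; omega

lemma fin_add_ne_sub {T : ℕ} [NeZero T] (hT : 3 ≤ T) (t : Fin T) : t + 1 ≠ t - 1 := by
  intro h
  have h2 : t + 2 = t := by
    have := congrArg (fun z => z + 1) h
    simpa [sub_add_cancel, add_assoc, one_add_one_eq_two] using this
  have h3 : (2 : Fin T) = 0 := by
    have := congrArg (fun z => z - t) h2
    simpa [add_comm, add_sub_cancel_right] using this
  have hv : ((2 : Fin T) : ℕ) = 2 := by
    have := Fin.val_cast_of_lt (n := T) (a := 2) (by omega)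
    rw [Nat.cast_ofNat] at this; exact this
  rw [h3] at hv; simp at hv

lemma blockCirc_mulVec {T N : ℕ} [NeZero T] (hT : 3 ≤ T)
    (L : Matrix (Fin N) (Fin N) ℝ) (ω : ℝ) (x : Fin T × Fin N → ℝ) (t : Fin T) (n : Fin N) :
    (blockCirc (T := T) (L + (2 * ω) • 1) (-(ω • 1)) *ᵥ x) (t, n)
      = (L *ᵥ fun m => x (t, m)) n + 2 * ω * x (t, n) - ω * x (t + 1, n) - ω * x (t - 1, n) := by
  have key : ∀ s : Fin T,
      (∑ m, blockCirc (T := T) (L + (2 * ω) • 1) (-(ω • 1)) (t, n) (s, m) * x (s, m))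
      = (if s = t then (L *ᵥ fun m => x (t, m)) n + 2 * ω * x (t, n) else 0)
        + (if s = t + 1 then -(ω * x (t + 1, n)) else 0)
        + (if s = t - 1 then -(ω * x (t - 1, n)) else 0) := by
    intro s
    by_cases h1 : s = t
    · subst h1
      simp [blockCirc, Ne.symm (fin_add_one_ne hT s), Ne.symm (fin_sub_one_ne hT s),
        Matrix.one_apply, add_mul, ite_mul, zero_mul, mul_ite, mul_zero,
        Finset.sum_add_distrib, Finset.sum_ite_eq, Matrix.mulVec, dotProduct]
    · by_cases h2 : s = t + 1
      · subst h2
        have hT1 : T ≠ 1 := by omega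
        simp [blockCirc, Ne.symm (fin_add_one_ne hT t), fin_add_ne_sub hT t, hT1,
          Matrix.one_apply, mul_ite, mul_zero, mul_one, Finset.sum_ite_eq]
      · by_cases h3 : s = t - 1
        · subst h3
          have hT1 : T ≠ 1 := by omega
          simp [blockCirc, Ne.symm (fin_sub_one_ne hT t), Ne.symm (fin_add_ne_sub hT t), hT1,
            Matrix.one_apply, mul_ite, mul_zero, mul_one, Finset.sum_ite_eq]
        · simp [blockCirc, h1, h2, h3, Ne.symm h1]
  rw [Matrix.mulVec, dotProduct, Fintype.sum_prod_type]
  simp_rw [key]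
  rw [Finset.sum_add_distrib, Finset.sum_add_distrib,
    Finset.sum_ite_eq' Finset.univ t, Finset.sum_ite_eq' Finset.univ (t+1),
    Finset.sum_ite_eq' Finset.univ (t-1)]
  simp only [Finset.mem_univ, if_true]
  ring

lemma blockCirc_quadform {T N : ℕ} [NeZero T] (hT : 3 ≤ T)
    (L : Matrix (Fin N) (Fin N) ℝ) (ω : ℝ) (x : Fin T × Fin N → ℝ) :
    x ⬝ᵥ (blockCirc (T := T) (L + (2 * ω) • 1) (-(ω • 1)) *ᵥ x)
      = (∑ t : Fin T, (fun m => x (t, m)) ⬝ᵥ (L *ᵥ fun m => x (t, m)))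
        + ω * ∑ t : Fin T, ∑ n, (x (t, n) - x (t + 1, n))^2 := by
  have hD : (∑ t : Fin T, ∑ n, x (t, n) * x (t - 1, n))
      = ∑ t : Fin T, ∑ n, x (t, n) * x (t + 1, n) := by
    refine Fintype.sum_equiv (Equiv.subRight 1) _ _ fun t => ?_
    simp only [Equiv.subRight_apply, sub_add_cancel]
    exact Finset.sum_congr rfl fun n _ => mul_comm _ _
  have hB' : (∑ t : Fin T, ∑ n, x (t + 1, n)^2) = ∑ t : Fin T, ∑ n, x (t, n)^2 := by
    refine Fintype.sum_equiv (Equiv.addRight 1) _ _ fun t => ?_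
    simp only [Equiv.coe_addRight]
  have lhs_eq : x ⬝ᵥ (blockCirc (T := T) (L + (2 * ω) • 1) (-(ω • 1)) *ᵥ x)
      = (∑ t : Fin T, ∑ n, x (t, n) * (L *ᵥ fun m => x (t, m)) n)
        + 2 * ω * (∑ t : Fin T, ∑ n, x (t, n)^2)
        - ω * (∑ t : Fin T, ∑ n, x (t, n) * x (t + 1, n))
        - ω * (∑ t : Fin T, ∑ n, x (t, n) * x (t - 1, n)) := by
    rw [dotProduct, Fintype.sum_prod_type]
    have : ∀ t : Fin T, ∀ n : Fin N,
        x (t, n) * (blockCirc (T := T) (L + (2 * ω) • 1) (-(ω • 1)) *ᵥ x) (t, n)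
        = x (t, n) * (L *ᵥ fun m => x (t, m)) n + 2 * ω * x (t, n)^2
          - ω * (x (t, n) * x (t + 1, n)) - ω * (x (t, n) * x (t - 1, n)) := by
      intro t n; rw [blockCirc_mulVec hT L ω x t n]; ring
    simp_rw [this]
    simp only [Finset.sum_sub_distrib, Finset.sum_add_distrib, ← Finset.mul_sum]
  have rhs_eq : (∑ t : Fin T, ∑ n, (x (t, n) - x (t + 1, n))^2)
      = (∑ t : Fin T, ∑ n, x (t, n)^2)
        - 2 * (∑ t : Fin T, ∑ n, x (t, n) * x (t + 1, n))
        + (∑ t : Fin T, ∑ n, x (t + 1, n)^2) := by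
    have : ∀ t : Fin T, ∀ n : Fin N, (x (t, n) - x (t + 1, n))^2
        = x (t, n)^2 - 2 * (x (t, n) * x (t + 1, n)) + x (t + 1, n)^2 := by
      intro t n; ring
    simp_rw [this]
    simp only [Finset.sum_sub_distrib, Finset.sum_add_distrib, ← Finset.mul_sum]
  have hdot : ∀ t : Fin T, (fun m => x (t, m)) ⬝ᵥ (L *ᵥ fun m => x (t, m))
      = ∑ n, x (t, n) * (L *ᵥ fun m => x (t, m)) n := fun t => rfl
  simp only [hdot]
  rw [lhs_eq, rhs_eq, hB', hD]
  ring

theorem stmt12 {T N : ℕ} [NeZero T] (hT : 3 ≤ T)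
    (L : Matrix (Fin N) (Fin N) ℝ) (hL : L.PosSemidef)
    (v0 : Fin N → ℝ) (hv0 : v0 ≠ 0)
    (hker : LinearMap.ker (Matrix.toLin' L) = Submodule.span ℝ {v0})
    (ω : ℝ) (hω : 0 < ω)
    (Lsupra : Matrix (Fin T × Fin N) (Fin T × Fin N) ℝ)
    (hLsupra : Lsupra = blockCirc (T := T) (L + (2 * ω) • 1) (-(ω • 1)))
    (ψ0 : Fin T × Fin N → ℝ) (hψ0 : ∀ p, ψ0 p = v0 p.2) :
    Lsupra.PosSemidef ∧ Lsupra.mulVec ψ0 = 0 ∧ ψ0 ≠ 0 ∧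
    LinearMap.ker (Matrix.toLin' Lsupra) = Submodule.span ℝ {ψ0} ∧
    Module.finrank ℝ (LinearMap.ker (Matrix.toLin' Lsupra)) = 1 := by
  subst hLsupra
  set M := blockCirc (T := T) (L + (2 * ω) • 1) (-(ω • 1)) with hM
  -- entrywise symmetry
  have hLs : ∀ a b, L a b = L b a := by
    intro a b
    conv_lhs => rw [← hL.1]
    simp [Matrix.conjTranspose_apply]
  have hsymm : ∀ p q, M p q = M q p := by
    intro p q
    simp only [hM, blockCirc]
    by_cases h : p.1 = q.1
    · rw [if_pos h, if_pos h.symm, Matrix.add_apply, Matrix.add_apply, hLs]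
      simp [Matrix.one_apply]
      by_cases hnm : p.2 = q.2
      · rw [if_pos hnm, if_pos hnm.symm]
      · rw [if_neg hnm, if_neg fun hh => hnm hh.symm]
    · rw [if_neg h, if_neg (show ¬q.1 = p.1 from fun hh => h hh.symm)]
      have hc : (q.1 = p.1 + 1 ∨ q.1 = p.1 - 1) ↔ (p.1 = q.1 + 1 ∨ p.1 = q.1 - 1) := by
        constructor
        · rintro (h1 | h1)
          · right; rw [h1, add_sub_cancel_right]
          · left; rw [h1, sub_add_cancel]
        · rintro (h1 | h1)
          · right; rw [h1, add_sub_cancel_right]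
          · left; rw [h1, sub_add_cancel]
      by_cases h2 : q.1 = p.1 + 1 ∨ q.1 = p.1 - 1
      · rw [if_pos h2, if_pos (hc.mp h2)]
        simp [Matrix.one_apply]
        by_cases hnm : p.2 = q.2
        · rw [if_pos hnm, if_pos hnm.symm]
        · rw [if_neg hnm, if_neg fun hh => hnm hh.symm]
      · rw [if_neg h2, if_neg fun hh => h2 (hc.mpr hh)]
  have hHerm : M.IsHermitian := by
    apply Matrix.ext
    intro p q
    rw [Matrix.conjTranspose_apply, star_trivial, hsymm]
  -- positivity
  have hPSD : M.PosSemidef := by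
    refine Matrix.PosSemidef.of_dotProduct_mulVec_nonneg hHerm fun y => ?_
    rw [star_trivial, blockCirc_quadform hT L ω y]
    have h1 : 0 ≤ ∑ t : Fin T, (fun m => y (t, m)) ⬝ᵥ (L *ᵥ fun m => y (t, m)) :=
      Finset.sum_nonneg fun t _ => by simpa using hL.dotProduct_mulVec_nonneg (fun m => y (t, m))
    have h2 : 0 ≤ ∑ t : Fin T, ∑ n, (y (t, n) - y (t + 1, n))^2 :=
      Finset.sum_nonneg fun t _ => Finset.sum_nonneg fun n _ => sq_nonneg _
    have := mul_nonneg hω.le h2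
    linarith
  -- ψ0 in kernel
  have hv0ker : L *ᵥ v0 = 0 := by
    have hmem : v0 ∈ LinearMap.ker (Matrix.toLin' L) :=
      hker ▸ Submodule.mem_span_singleton_self v0
    rw [LinearMap.mem_ker, Matrix.toLin'_apply] at hmem
    exact hmem
  have hmul0 : M.mulVec ψ0 = 0 := by
    funext p
    obtain ⟨t, n⟩ := p
    rw [show M.mulVec ψ0 (t, n) = (M *ᵥ ψ0) (t, n) from rfl, hM,
      blockCirc_mulVec hT L ω ψ0 t n]
    have hrow : (fun m => ψ0 (t, m)) = v0 := funext fun m => hψ0 (t, m)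
    rw [hrow, hv0ker]
    simp only [Pi.zero_apply, hψ0]
    ring
  have hψ0ne : ψ0 ≠ 0 := by
    intro h
    apply hv0
    funext n
    have := congrFun h ((0 : Fin T), n)
    rw [hψ0] at this
    simpa using this
  -- kernel equality
  have hkereq : LinearMap.ker (Matrix.toLin' M) = Submodule.span ℝ {ψ0} := by
    apply le_antisymm
    · intro y hy
      rw [LinearMap.mem_ker, Matrix.toLin'_apply] at hy
      have hq : y ⬝ᵥ (M *ᵥ y) = 0 := by rw [hy, dotProduct_zero]
      rw [hM, blockCirc_quadform hT L ω y] at hq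
      have hAnn : ∀ t : Fin T, t ∈ Finset.univ →
          0 ≤ (fun m => y (t, m)) ⬝ᵥ (L *ᵥ fun m => y (t, m)) :=
        fun t _ => by simpa using hL.dotProduct_mulVec_nonneg (fun m => y (t, m))
      have hA : 0 ≤ ∑ t : Fin T, (fun m => y (t, m)) ⬝ᵥ (L *ᵥ fun m => y (t, m)) :=
        Finset.sum_nonneg hAnn
      have hB : 0 ≤ ∑ t : Fin T, ∑ n, (y (t, n) - y (t + 1, n))^2 :=
        Finset.sum_nonneg fun t _ => Finset.sum_nonneg fun n _ => sq_nonneg _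
      have hωB : 0 ≤ ω * ∑ t : Fin T, ∑ n, (y (t, n) - y (t + 1, n))^2 :=
        mul_nonneg hω.le hB
      have hA0 : ∑ t : Fin T, (fun m => y (t, m)) ⬝ᵥ (L *ᵥ fun m => y (t, m)) = 0 :=
        le_antisymm (by linarith) hA
      have hB0 : ∑ t : Fin T, ∑ n, (y (t, n) - y (t + 1, n))^2 = 0 := by
        have hωB0 : ω * ∑ t : Fin T, ∑ n, (y (t, n) - y (t + 1, n))^2 = 0 := by linarith
        exact (mul_eq_zero.mp hωB0).resolve_left (ne_of_gt hω)
      have hstep : ∀ t : Fin T, ∀ n, y (t, n) = y (t + 1, n) := by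
        intro t n
        have ht := (Finset.sum_eq_zero_iff_of_nonneg
          (fun t _ => Finset.sum_nonneg fun n _ => sq_nonneg _)).mp hB0 t (Finset.mem_univ t)
        have hn := (Finset.sum_eq_zero_iff_of_nonneg
          (fun n _ => sq_nonneg _)).mp ht n (Finset.mem_univ n)
        have := (pow_eq_zero_iff two_ne_zero).mp hn
        linarith [sub_eq_zero.mp this]
      have hall : ∀ t : Fin T, ∀ n, y (t, n) = y (0, n) := by
        have key : ∀ k : ℕ, ∀ n, y ((k : Fin T), n) = y ((0 : Fin T), n) := by
          intro k
          induction k with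
          | zero => intro n; norm_num
          | succ k ih =>
            intro n
            have hcast : ((k + 1 : ℕ) : Fin T) = (k : Fin T) + 1 := by push_cast; ring
            rw [hcast, ← hstep (k : Fin T) n]
            exact ih n
        intro t n
        have := key t.val n
        rwa [Fin.cast_val_eq_self] at this
      have hrow0 : L *ᵥ (fun m => y ((0 : Fin T), m)) = 0 := by
        have h0 : (fun m => y ((0 : Fin T), m)) ⬝ᵥ (L *ᵥ fun m => y ((0 : Fin T), m)) = 0 :=
          (Finset.sum_eq_zero_iff_of_nonneg hAnn).mp hA0 0 (Finset.mem_univ _)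
        have := (hL.dotProduct_mulVec_zero_iff (fun m => y ((0 : Fin T), m)))
        rw [star_trivial] at this
        exact this.mp h0
      have hmem : (fun m => y ((0 : Fin T), m)) ∈ LinearMap.ker (Matrix.toLin' L) := by
        rw [LinearMap.mem_ker, Matrix.toLin'_apply, hrow0]
      rw [hker, Submodule.mem_span_singleton] at hmem
      obtain ⟨c, hc⟩ := hmem
      rw [Submodule.mem_span_singleton]
      refine ⟨c, ?_⟩
      funext p
      obtain ⟨t, n⟩ := p
      rw [Pi.smul_apply, hψ0, smul_eq_mul, hall t n]
      have := congrFun hc n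
      simpa using this
    · rw [Submodule.span_le, Set.singleton_subset_iff]
      exact LinearMap.mem_ker.mpr (by rw [Matrix.toLin'_apply, hmul0])
  refine ⟨hPSD, hmul0, hψ0ne, hkereq, ?_⟩
  rw [hkereq]
  exact finrank_span_singleton hψ0ne
end

section
/- Let L be symmetric PSD with one-dimensional kernel spanned by v₀, and 𝓛' the block circulant supra-Laplacian with diagonal blocks L + 2ωI and off-diagonal/corner blocks −ωI, with 4ω < λ₂(L). Then every eigenvector of 𝓛' with eigenvalue < λ₂(L) lies in the T-dimensional subspace {ψ ∈ ℝ^{NT} : ψ_j = α_j v₀ for some scalars α_j, j = 1, ..., T}, i.e., each of its blocks is a scalar multiple of v₀. -/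
open Matrix Real
open scoped RealInnerProductSpace

/-- The eigenvalues of a Hermitian real matrix, sorted in nondecreasing order:
`sortedEig hM j` is the `j`-th smallest eigenvalue of `M` (counted with multiplicity). -/
noncomputable def sortedEig {n : ℕ} {M : Matrix (Fin n) (Fin n) ℝ} (hM : M.IsHermitian) :
    Fin n → ℝ :=
  hM.eigenvalues ∘ Tuple.sort hM.eigenvalues

lemma inner_eq_dot {N : ℕ} (a b : EuclideanSpace ℝ (Fin N)) :
    ⟪a, b⟫ = (a : Fin N → ℝ) ⬝ᵥ (b : Fin N → ℝ) := by
  simp [PiLp.inner_apply, dotProduct, RCLike.inner_apply, mul_comm]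

lemma expand_dot {N : ℕ} (b : OrthonormalBasis (Fin N) ℝ (EuclideanSpace ℝ (Fin N)))
    (y z : Fin N → ℝ) :
    y ⬝ᵥ z = ∑ i, ((b i : Fin N → ℝ) ⬝ᵥ y) * ((b i : Fin N → ℝ) ⬝ᵥ z) := by
  have h := b.sum_inner_mul_inner (WithLp.toLp 2 y) (WithLp.toLp 2 z)
  rw [inner_eq_dot] at h
  rw [← h]
  congr 1; funext i
  rw [inner_eq_dot, inner_eq_dot, dotProduct_comm (y : Fin N → ℝ)]

lemma gapLemma {N : ℕ} (hN : 2 ≤ N)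
    (L : Matrix (Fin N) (Fin N) ℝ) (hL : L.PosSemidef) (hLherm : L.IsHermitian)
    (v0 : Fin N → ℝ) (hv0 : v0 ≠ 0)
    (hker : LinearMap.ker (Matrix.toLin' L) = Submodule.span ℝ {v0})
    (x : Fin N → ℝ) (hx : v0 ⬝ᵥ x = 0) :
    sortedEig hLherm ⟨1, by omega⟩ * (x ⬝ᵥ x) ≤ x ⬝ᵥ (L *ᵥ x) := by
  classical
  set σ := Tuple.sort hLherm.eigenvalues with hσ
  set lam := hLherm.eigenvalues with hlam
  have hmono : Monotone (lam ∘ σ) := Tuple.monotone_sort lam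
  have hnonneg : ∀ i, 0 ≤ lam i := fun i => hL.eigenvalues_nonneg i
  set e : Fin N → EuclideanSpace ℝ (Fin N) := fun i => hLherm.eigenvectorBasis i with he
  have heig : ∀ i, L *ᵥ (e i : Fin N → ℝ) = lam i • (e i : Fin N → ℝ) := by
    intro i
    exact hLherm.mulVec_eigenvectorBasis i
  have hsym : Lᵀ = L := by simpa using hLherm.eq
  -- dot with L in eigenbasis
  have hdotL : ∀ y : Fin N → ℝ,
      y ⬝ᵥ (L *ᵥ y) = ∑ i, lam i * (((e i : Fin N → ℝ) ⬝ᵥ y) * ((e i : Fin N → ℝ) ⬝ᵥ y)) := by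
    intro y
    rw [expand_dot hLherm.eigenvectorBasis y (L *ᵥ y)]
    congr 1; funext i
    have h1 : (e i : Fin N → ℝ) ⬝ᵥ (L *ᵥ y) = lam i * ((e i : Fin N → ℝ) ⬝ᵥ y) := by
      rw [show ((e i : Fin N → ℝ) ⬝ᵥ (L *ᵥ y)) = ((e i : Fin N → ℝ) ᵥ* L) ⬝ᵥ y from
        dotProduct_mulVec _ _ _, ← Matrix.mulVec_transpose, hsym, heig i, smul_dotProduct, smul_eq_mul]
    show ((e i : Fin N → ℝ) ⬝ᵥ y) * ((e i : Fin N → ℝ) ⬝ᵥ (L *ᵥ y)) = _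
    rw [h1]; ring
  -- L *ᵥ v0 = 0
  have hv0mem : v0 ∈ Submodule.span ℝ {v0} := Submodule.mem_span_singleton_self v0
  have hLv0 : L *ᵥ v0 = 0 := by
    simpa [Matrix.toLin'_apply] using (LinearMap.mem_ker.mp ((hker.symm ▸ hv0mem) : v0 ∈ LinearMap.ker (Matrix.toLin' L)))
  -- some eigenvalue is zero
  have hzero : ∃ i, lam i = 0 := by
    have h0 : (0:ℝ) = ∑ i, lam i * (((e i : Fin N → ℝ) ⬝ᵥ v0) * ((e i : Fin N → ℝ) ⬝ᵥ v0)) := by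
      rw [← hdotL v0, hLv0, dotProduct_zero]
    have hterm : ∀ i ∈ Finset.univ, 0 ≤ lam i * (((e i : Fin N → ℝ) ⬝ᵥ v0) * ((e i : Fin N → ℝ) ⬝ᵥ v0)) := by
      intro i _
      exact mul_nonneg (hnonneg i) (mul_self_nonneg _)
    have hall : ∀ i ∈ Finset.univ, lam i * (((e i : Fin N → ℝ) ⬝ᵥ v0) * ((e i : Fin N → ℝ) ⬝ᵥ v0)) = 0 :=
      (Finset.sum_eq_zero_iff_of_nonneg hterm).mp h0.symm
    -- some coordinate of v0 is nonzero
    have hex : ∃ i, (e i : Fin N → ℝ) ⬝ᵥ v0 ≠ 0 := by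
      by_contra hc
      push_neg at hc
      apply hv0
      have hin : ∀ i, ⟪e i, WithLp.toLp 2 v0⟫ = 0 := by
        intro i; rw [inner_eq_dot]; exact hc i
      have hv0' : WithLp.toLp 2 v0 = 0 := by
        have hs := hLherm.eigenvectorBasis.sum_repr (WithLp.toLp 2 v0)
        rw [← hs]
        apply Finset.sum_eq_zero
        intro i _
        rw [OrthonormalBasis.repr_apply_apply, hin i, zero_smul]
      exact congrArg WithLp.ofLp hv0'
    obtain ⟨i, hi⟩ := hex
    refine ⟨i, ?_⟩
    have := hall i (Finset.mem_univ i)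
    rcases mul_eq_zero.mp this with h | h
    · exact h
    · exact absurd (mul_self_eq_zero.mp h) hi
  obtain ⟨iz, hiz⟩ := hzero
  have h0N : 0 < N := by omega
  set i0 : Fin N := σ ⟨0, h0N⟩ with hi0
  have hlami0 : lam i0 = 0 := by
    refine le_antisymm ?_ (hnonneg i0)
    have h1 : (lam ∘ σ) ⟨0, h0N⟩ ≤ (lam ∘ σ) (σ.symm iz) := by
      apply hmono
      rw [Fin.le_def]
      exact Nat.zero_le _
    simpa [hiz] using h1
  have hmem : (e i0 : Fin N → ℝ) ∈ LinearMap.ker (Matrix.toLin' L) := by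
    rw [LinearMap.mem_ker]
    have h3 : Matrix.toLin' L (e i0 : Fin N → ℝ) = L *ᵥ (e i0 : Fin N → ℝ) :=
      Matrix.toLin'_apply _ _
    exact h3.trans (by rw [heig i0, hlami0, zero_smul])
  rw [hker, Submodule.mem_span_singleton] at hmem
  obtain ⟨c, hc⟩ := hmem
  have hci0 : (e i0 : Fin N → ℝ) ⬝ᵥ x = 0 := by
    rw [← hc, smul_dotProduct, hx, smul_zero]
  have hge : ∀ i, i ≠ i0 → sortedEig hLherm ⟨1, by omega⟩ ≤ lam i := by
    intro i hi
    have hne : σ.symm i ≠ ⟨0, h0N⟩ := by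
      intro h
      apply hi
      rw [hi0, ← h, Equiv.apply_symm_apply]
    have hle : (⟨1, by omega⟩ : Fin N) ≤ σ.symm i := by
      rw [Fin.le_def]
      have : (σ.symm i).val ≠ 0 := fun h => hne (Fin.ext h)
      simpa using Nat.one_le_iff_ne_zero.mpr this
    have h2 := hmono hle
    simpa [sortedEig, ← hσ, ← hlam] using h2
  rw [hdotL x, expand_dot hLherm.eigenvectorBasis x x, Finset.mul_sum]
  apply Finset.sum_le_sum
  intro i _
  by_cases hii : i = i0
  · have h4 : ((hLherm.eigenvectorBasis i : Fin N → ℝ) ⬝ᵥ x) = 0 := by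
      rw [hii]; exact hci0
    rw [h4]
    simp
  · exact mul_le_mul_of_nonneg_right (hge i hii) (mul_self_nonneg _)

lemma dot_am_gm {N : ℕ} (x y : Fin N → ℝ) : 2 * (x ⬝ᵥ y) ≤ x ⬝ᵥ x + y ⬝ᵥ y := by
  have h : 0 ≤ (x - y) ⬝ᵥ (x - y) := Finset.sum_nonneg fun i _ => mul_self_nonneg _
  have h2 : (x - y) ⬝ᵥ (x - y) = x ⬝ᵥ x - 2 * (x ⬝ᵥ y) + y ⬝ᵥ y := by
    rw [sub_dotProduct, dotProduct_sub, dotProduct_sub,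
      dotProduct_comm y x]
    ring
  linarith [h2 ▸ h]

theorem stmt18 {T N : ℕ} [NeZero T] (hT : 3 ≤ T) (hN : 2 ≤ N)
    (L : Matrix (Fin N) (Fin N) ℝ) (hL : L.PosSemidef) (hLherm : L.IsHermitian)
    (v0 : Fin N → ℝ) (hv0 : v0 ≠ 0)
    (hker : LinearMap.ker (Matrix.toLin' L) = Submodule.span ℝ {v0})
    (ω : ℝ) (hω : 0 < ω)
    (hgap : 4 * ω < sortedEig hLherm ⟨1, by omega⟩)
    (Lsupra : Matrix (Fin T × Fin N) (Fin T × Fin N) ℝ)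
    (hLsupra : Lsupra = blockCirc (T := T) (L + (2 * ω) • 1) (-(ω • 1))) :
    ∀ (ψ : Fin T × Fin N → ℝ) (μ : ℝ),
      Lsupra.mulVec ψ = μ • ψ → ψ ≠ 0 → μ < sortedEig hLherm ⟨1, by omega⟩ →
      ∀ j : Fin T, ∃ α : ℝ, (fun a => ψ (j, a)) = α • v0 := by
  intro ψ μ hLS _hψ hμ'
  have h1N : 1 < N := by omega
  have hμ : μ < sortedEig hLherm ⟨1, h1N⟩ := hμ'
  set lam2 : ℝ := sortedEig hLherm ⟨1, h1N⟩ with hlam2def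
  -- basic Fin T facts
  have hval1 : (1 : Fin T).val = 1 := by
    rw [Fin.val_one', Nat.mod_eq_of_lt (by omega)]
  have h10 : (1 : Fin T) ≠ 0 := by
    intro h
    have h2 := congrArg Fin.val h
    rw [hval1] at h2
    simp at h2
  have hne1 : ∀ j : Fin T, j ≠ j + 1 := by
    intro j h
    exact h10 (add_eq_left.mp h.symm)
  have hne2 : ∀ j : Fin T, j ≠ j - 1 := by
    intro j h
    exact h10 (sub_eq_self.mp h.symm)
  have hne3 : ∀ j : Fin T, j + 1 ≠ j - 1 := by
    intro j h
    have h2 : j + (1 + 1) = j := by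
      rw [← add_assoc, h, sub_add_cancel]
    have h3 : (1 + 1 : Fin T) = 0 := add_eq_left.mp h2
    have h4 := congrArg Fin.val h3
    rw [Fin.val_add, hval1, Nat.mod_eq_of_lt (by omega)] at h4
    simp at h4
  -- notation
  set ψb : Fin T → Fin N → ℝ := fun j a => ψ (j, a) with hψb
  have hv0mem : v0 ∈ Submodule.span ℝ {v0} := Submodule.mem_span_singleton_self v0
  have hLv0 : L *ᵥ v0 = 0 := by
    simpa [Matrix.toLin'_apply] using (LinearMap.mem_ker.mp ((hker.symm ▸ hv0mem) : v0 ∈ LinearMap.ker (Matrix.toLin' L)))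
  have hv0v0 : v0 ⬝ᵥ v0 ≠ 0 := fun h => hv0 (dotProduct_self_eq_zero.mp h)
  set α : Fin T → ℝ := fun j => (v0 ⬝ᵥ ψb j) / (v0 ⬝ᵥ v0) with hα
  set w : Fin T → Fin N → ℝ := fun j => ψb j - α j • v0 with hw
  have hworth : ∀ j, v0 ⬝ᵥ w j = 0 := by
    intro j
    rw [hw]
    simp only [dotProduct_sub, dotProduct_smul, smul_eq_mul, hα]
    field_simp
    simp
  have hψdecomp : ∀ j, ψb j = w j + α j • v0 := by
    intro j
    rw [hw]
    exact (sub_add_cancel _ _).symm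
  -- block equation
  have hblock : ∀ (j : Fin T) (a : Fin N),
      (L *ᵥ ψb j) a + (2 * ω) * ψb j a - ω * ψb (j + 1) a - ω * ψb (j - 1) a
        = μ * ψb j a := by
    intro j a
    have h := congrFun hLS (j, a)
    rw [hLsupra] at h
    rw [Matrix.mulVec] at h
    rw [show (fun p => blockCirc (T := T) (L + (2 * ω) • 1) (-(ω • 1)) (j, a) p) ⬝ᵥ ψ
        = ∑ k : Fin T, ∑ b : Fin N,
            blockCirc (T := T) (L + (2 * ω) • 1) (-(ω • 1)) (j, a) (k, b) * ψ (k, b) from by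
      rw [dotProduct, Fintype.sum_prod_type]] at h
    have hsplit : ∀ (f : Fin T → ℝ), (∀ k, k ≠ j → k ≠ j + 1 → k ≠ j - 1 → f k = 0) →
        ∑ k, f k = f j + f (j + 1) + f (j - 1) := by
      intro f hf
      have hsub : ∑ k, f k = ∑ k ∈ ({j, j + 1, j - 1} : Finset (Fin T)), f k := by
        symm
        apply Finset.sum_subset (Finset.subset_univ _)
        intro k _ hk
        simp only [Finset.mem_insert, Finset.mem_singleton, not_or] at hk
        exact hf k hk.1 hk.2.1 hk.2.2
      rw [hsub, Finset.sum_insert (by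
          simp only [Finset.mem_insert, Finset.mem_singleton, not_or]
          exact ⟨hne1 j, hne2 j⟩),
        Finset.sum_insert (by
          simp only [Finset.mem_singleton]
          exact hne3 j),
        Finset.sum_singleton, add_assoc]
    rw [hsplit _ (by
      intro k hk1 hk2 hk3
      apply Finset.sum_eq_zero
      intro b _
      rw [show blockCirc (T := T) (L + (2 * ω) • 1) (-(ω • 1)) (j, a) (k, b) = 0 from by
        simp only [blockCirc]
        rw [if_neg (fun hh => hk1 hh.symm), if_neg (by
          push_neg
          exact ⟨hk2, hk3⟩)], zero_mul])] at h
    have e1 : ∑ b : Fin N, blockCirc (T := T) (L + (2 * ω) • 1) (-(ω • 1)) (j, a) (j, b) * ψ (j, b)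
        = (L *ᵥ ψb j) a + (2 * ω) * ψb j a := by
      have hterm : ∀ b, blockCirc (T := T) (L + (2 * ω) • 1) (-(ω • 1)) (j, a) (j, b) * ψ (j, b)
          = L a b * ψ (j, b) + (if a = b then (2 * ω) * ψ (j, b) else 0) := by
        intro b
        by_cases hab : a = b
        · subst hab
          simp [blockCirc, Matrix.add_apply, Matrix.smul_apply, Matrix.one_apply]
          ring
        · simp [blockCirc, hab, Matrix.add_apply, Matrix.smul_apply, Matrix.one_apply]
      rw [Finset.sum_congr rfl (fun b _ => hterm b), Finset.sum_add_distrib,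
        Finset.sum_ite_eq Finset.univ a (fun b => (2 * ω) * ψ (j, b))]
      simp [Matrix.mulVec, dotProduct, hψb]
    have e2 : ∀ k, (j = k → False) → (k = j + 1 ∨ k = j - 1) →
        ∑ b : Fin N, blockCirc (T := T) (L + (2 * ω) • 1) (-(ω • 1)) (j, a) (k, b) * ψ (k, b)
        = -(ω * ψb k a) := by
      intro k hkj hk
      have hterm : ∀ b, blockCirc (T := T) (L + (2 * ω) • 1) (-(ω • 1)) (j, a) (k, b) * ψ (k, b)
          = (if a = b then -(ω * ψ (k, b)) else 0) := by
        intro b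
        by_cases hab : a = b
        · subst hab
          simp [blockCirc, if_neg hkj, if_pos hk]
        · simp [blockCirc, if_neg hkj, if_pos hk, hab]
      rw [Finset.sum_congr rfl (fun b _ => hterm b),
        Finset.sum_ite_eq Finset.univ a (fun b => -(ω * ψ (k, b)))]
      simp [hψb]
    rw [e1, e2 (j + 1) (fun hh => hne1 j hh) (Or.inl rfl),
      e2 (j - 1) (fun hh => hne2 j hh) (Or.inr rfl)] at h
    simp only [Pi.smul_apply, smul_eq_mul] at h
    have hgoal : ψ (j, a) = ψb j a := rfl
    rw [hgoal] at h
    linarith [h]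
  -- vector form
  have hvec : ∀ j, L *ᵥ ψb j + (2 * ω) • ψb j - ω • ψb (j + 1) - ω • ψb (j - 1) = μ • ψb j := by
    intro j
    funext a
    have h := hblock j a
    simp only [Pi.add_apply, Pi.sub_apply, Pi.smul_apply, smul_eq_mul]
    linarith [h]
  have hswap : ∀ j k, w j ⬝ᵥ ψb k = w j ⬝ᵥ w k := by
    intro j k
    rw [hψdecomp k, dotProduct_add, dotProduct_smul, smul_eq_mul,
      dotProduct_comm (w j) v0, hworth j, mul_zero, add_zero]
  have hLswap : ∀ j, w j ⬝ᵥ (L *ᵥ ψb j) = w j ⬝ᵥ (L *ᵥ w j) := by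
    intro j
    rw [hψdecomp j, Matrix.mulVec_add, Matrix.mulVec_smul, hLv0, smul_zero, add_zero]
  have hdotj : ∀ j, w j ⬝ᵥ (L *ᵥ w j) + (2 * ω) * (w j ⬝ᵥ w j) - ω * (w j ⬝ᵥ w (j + 1))
      - ω * (w j ⬝ᵥ w (j - 1)) = μ * (w j ⬝ᵥ w j) := by
    intro j
    have h := congrArg (fun v => w j ⬝ᵥ v) (hvec j)
    simp only [dotProduct_add, dotProduct_sub, dotProduct_smul,
      smul_eq_mul] at h
    rw [hswap j j, hswap j (j + 1), hswap j (j - 1), hLswap j] at h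
    exact h
  set S : ℝ := ∑ j, w j ⬝ᵥ w j with hS
  have hsum : (∑ j, w j ⬝ᵥ (L *ᵥ w j)) + (2 * ω) * S - ω * (∑ j, w j ⬝ᵥ w (j + 1))
      - ω * (∑ j, w j ⬝ᵥ w (j - 1)) = μ * S := by
    rw [hS, Finset.mul_sum, Finset.mul_sum, Finset.mul_sum, Finset.mul_sum,
      ← Finset.sum_add_distrib, ← Finset.sum_sub_distrib, ← Finset.sum_sub_distrib]
    exact Finset.sum_congr rfl fun j _ => hdotj j
  have hgapj : ∀ j, lam2 * (w j ⬝ᵥ w j) ≤ w j ⬝ᵥ (L *ᵥ w j) := fun j =>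
    gapLemma hN L hL hLherm v0 hv0 hker (w j) (hworth j)
  have hgapsum : lam2 * S ≤ ∑ j, w j ⬝ᵥ (L *ᵥ w j) := by
    rw [hS, Finset.mul_sum]
    exact Finset.sum_le_sum fun j _ => hgapj j
  have hself : ∀ j, (0 : ℝ) ≤ w j ⬝ᵥ w j := fun j =>
    Finset.sum_nonneg fun i _ => mul_self_nonneg _
  have hshift1 : ∑ j, w (j + 1) ⬝ᵥ w (j + 1) = S := by
    rw [hS]
    exact Equiv.sum_comp (Equiv.addRight (1 : Fin T)) (fun j => w j ⬝ᵥ w j)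
  have hshift2 : ∑ j, w (j - 1) ⬝ᵥ w (j - 1) = S := by
    rw [hS]
    exact Equiv.sum_comp (Equiv.subRight (1 : Fin T)) (fun j => w j ⬝ᵥ w j)
  have hA : (∑ j, w j ⬝ᵥ w (j + 1)) ≤ S := by
    have h2 : ∑ j, 2 * (w j ⬝ᵥ w (j + 1)) ≤ ∑ j, (w j ⬝ᵥ w j + w (j + 1) ⬝ᵥ w (j + 1)) :=
      Finset.sum_le_sum fun j _ => dot_am_gm _ _
    rw [Finset.sum_add_distrib, hshift1, ← hS, ← Finset.mul_sum] at h2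
    linarith
  have hB : (∑ j, w j ⬝ᵥ w (j - 1)) ≤ S := by
    have h2 : ∑ j, 2 * (w j ⬝ᵥ w (j - 1)) ≤ ∑ j, (w j ⬝ᵥ w j + w (j - 1) ⬝ᵥ w (j - 1)) :=
      Finset.sum_le_sum fun j _ => dot_am_gm _ _
    rw [Finset.sum_add_distrib, hshift2, ← hS, ← Finset.mul_sum] at h2
    linarith
  have hSnonneg : (0 : ℝ) ≤ S := Finset.sum_nonneg fun j _ => hself j
  have hfinal : lam2 * S ≤ μ * S := by
    have hωA := mul_le_mul_of_nonneg_left hA hω.le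
    have hωB := mul_le_mul_of_nonneg_left hB hω.le
    linarith [hsum, hgapsum]
  have hS0 : S = 0 := by
    by_contra hne
    have hpos : 0 < S := lt_of_le_of_ne hSnonneg (Ne.symm hne)
    have := mul_lt_mul_of_pos_right hμ hpos
    linarith
  have hwj : ∀ j, w j = 0 := by
    intro j
    have hall := (Finset.sum_eq_zero_iff_of_nonneg (fun k _ => hself k)).mp (hS.symm.trans hS0)
    exact dotProduct_self_eq_zero.mp (hall j (Finset.mem_univ j))
  intro j
  refine ⟨α j, ?_⟩
  have h5 : ψb j - α j • v0 = 0 := hwj j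
  exact sub_eq_zero.mp h5
end
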